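/- Let Γ₁,…,Γ_K (K ≥ 1) be d×d complex matrices that are Hermitian, unitary, traceless, and pairwise anticommuting. Let r ≥ 0 and D ≥ K·r + 1, and suppose Uₖ = 2Pₖ − I_D where each Pₖ is a D×D orthogonal projection of rank at most r. Then ‖W_K(U₁,…,U_K)‖ ≥ K + 2√K, where W_K(U₁,…,U_K) := ∑_{k=1}^K ( Γₖ ⊗ (Uₖ ⊗ I_D + I_D ⊗ Uₖ) + I_d ⊗ Uₖ ⊗ Uₖ ). -/

import Mathlib

open Matrix
open scoped Matrix.Norms.L2Operator Kronecker


lemma mySum_mulVec {n ι : Type*} [Fintype n] (s : Finset ι) (M : ι → Matrix n n ℂ)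
    (x : n → ℂ) : (∑ k ∈ s, M k) *ᵥ x = ∑ k ∈ s, (M k *ᵥ x) := by
  ext i
  simp only [mulVec, dotProduct, Finset.sum_apply, Matrix.sum_apply, Finset.sum_mul]
  rw [Finset.sum_comm]

lemma myKron_mulVec {m n : Type*} [Fintype m] [Fintype n]
    (A : Matrix m m ℂ) (B : Matrix n n ℂ) (x : m → ℂ) (y : n → ℂ) :
    (A ⊗ₖ B) *ᵥ (fun p => x p.1 * y p.2) = fun p => (A *ᵥ x) p.1 * (B *ᵥ y) p.2 := by
  ext ⟨i, a⟩
  show ∑ jb : m × n, (A i jb.1 * B a jb.2) * (x jb.1 * y jb.2)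
      = (∑ j, A i j * x j) * (∑ b, B a b * y b)
  rw [Finset.sum_mul_sum, Fintype.sum_prod_type]
  exact Finset.sum_congr rfl fun _ _ => Finset.sum_congr rfl fun _ _ => by ring


/-- The game operator `W_K(U₁,…,U_K) = ∑ₖ (Γₖ ⊗ (Uₖ ⊗ I_D + I_D ⊗ Uₖ) + I_d ⊗ Uₖ ⊗ Uₖ)`. -/
noncomputable def WK {K d D : ℕ} (Γ : Fin K → Matrix (Fin d) (Fin d) ℂ)
    (U : Fin K → Matrix (Fin D) (Fin D) ℂ) :
    Matrix (Fin d × (Fin D × Fin D)) (Fin d × (Fin D × Fin D)) ℂ :=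
  ∑ k, (Γ k ⊗ₖ (U k ⊗ₖ (1 : Matrix (Fin D) (Fin D) ℂ)
          + (1 : Matrix (Fin D) (Fin D) ℂ) ⊗ₖ U k)
        + (1 : Matrix (Fin d) (Fin d) ℂ) ⊗ₖ (U k ⊗ₖ U k))

/-- For a Clifford family `Γ₁, …, Γ_K` (Hermitian, unitary, traceless,
pairwise anticommuting `d × d` matrices) and `D ≥ K·r + 1`, if each `Uₖ = 2Pₖ − I_D`
for orthogonal projections `Pₖ` of rank at most `r`, then `‖W_K(U₁,…,U_K)‖ ≥ K + 2√K`. -/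
theorem stmt5 (K d D r : ℕ) (hK : 1 ≤ K) (hd : 0 < d) (hD : K * r + 1 ≤ D)
    (Γ : Fin K → Matrix (Fin d) (Fin d) ℂ)
    (hherm : ∀ k, (Γ k).IsHermitian)
    (hunit : ∀ k, Γ k * Γ k = 1)
    (htrace : ∀ k, (Γ k).trace = 0)
    (hanti : ∀ i j, i ≠ j → Γ i * Γ j + Γ j * Γ i = 0)
    (P U : Fin K → Matrix (Fin D) (Fin D) ℂ)
    (hproj : ∀ k, (P k).IsHermitian ∧ P k * P k = P k)
    (hrank : ∀ k, (P k).rank ≤ r)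
    (hU : ∀ k, U k = (2 : ℂ) • P k - 1) :
    K + 2 * Real.sqrt K ≤ ‖WK Γ U‖ := by
  classical
  -- Step 1: common kernel vector v of all P k
  set N : Fin K → Submodule ℂ (Fin D → ℂ) := fun k => LinearMap.ker (P k).mulVecLin with hN
  have hNk : ∀ k, D ≤ Module.finrank ℂ (N k) + r := by
    intro k
    show D ≤ Module.finrank ℂ ↥(LinearMap.ker (P k).mulVecLin) + r
    have h1 := LinearMap.finrank_range_add_finrank_ker (P k).mulVecLin
    have h2 : Module.finrank ℂ (Fin D → ℂ) = D := by simp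
    rw [h2] at h1
    have h3 := hrank k
    unfold Matrix.rank at h3
    omega
  have key : ∀ s : Finset (Fin K),
      D ≤ Module.finrank ℂ ↥(⨅ k ∈ s, N k) + s.card * r := by
    intro s
    induction s using Finset.induction_on with
    | empty =>
      have : (⨅ k ∈ (∅ : Finset (Fin K)), N k) = ⊤ := by simp
      rw [this]
      have h2 : Module.finrank ℂ (Fin D → ℂ) = D := by simp
      rw [finrank_top, h2]
      simp
    | @insert a s ha ih =>
      rw [Finset.iInf_insert, Finset.card_insert_of_notMem ha, add_mul, one_mul]
      have e := Submodule.finrank_sup_add_finrank_inf_eq (N a) (⨅ k ∈ s, N k)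
      have hle : Module.finrank ℂ ↥(N a ⊔ ⨅ k ∈ s, N k) ≤ D := by
        have h := Submodule.finrank_le (N a ⊔ ⨅ k ∈ s, N k)
        simpa using h
      have ha' := hNk a
      generalize s.card * r = m at ih ⊢
      omega
  have hpos : 0 < Module.finrank ℂ ↥(⨅ k ∈ (Finset.univ : Finset (Fin K)), N k) := by
    have h := key Finset.univ
    have hc : (Finset.univ : Finset (Fin K)).card = K := by simp
    rw [hc] at h
    omega
  haveI : Nontrivial ↥(⨅ k ∈ (Finset.univ : Finset (Fin K)), N k) :=
    Module.nontrivial_of_finrank_pos (R := ℂ) hpos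
  obtain ⟨v₀, hv₀ne⟩ := exists_ne (0 : ↥(⨅ k ∈ (Finset.univ : Finset (Fin K)), N k))
  set v : Fin D → ℂ := (v₀ : Fin D → ℂ) with hvdef
  have hv0 : v ≠ 0 := by
    intro h
    apply hv₀ne
    exact Subtype.ext h
  have hPv : ∀ k, P k *ᵥ v = 0 := by
    intro k
    have hm := v₀.2
    rw [Submodule.mem_iInf] at hm
    have hm' := hm k
    rw [Submodule.mem_iInf] at hm'
    have := hm' (Finset.mem_univ k)
    simpa [hN, Matrix.mulVecLin_apply] using this
  have hUv : ∀ k, U k *ᵥ v = -v := by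
    intro k
    rw [hU k, sub_mulVec, smul_mulVec, hPv k, smul_zero, one_mulVec, zero_sub]
  -- Step 2: S = ∑ Γ k
  set S : Matrix (Fin d) (Fin d) ℂ := ∑ k, Γ k with hSdef
  have hSH : S.IsHermitian := by
    show Sᴴ = S
    rw [hSdef, conjTranspose_sum]
    exact Finset.sum_congr rfl fun k _ => (hherm k)
  have hSS : S * S = (K : ℂ) • 1 := by
    have hpair : ∀ i j : Fin K, Γ i * Γ j + Γ j * Γ i
        = if i = j then (2:ℂ) • 1 else 0 := by
      intro i j
      by_cases h : i = j
      · subst h; rw [if_pos rfl, hunit, two_smul]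
      · rw [if_neg h]; exact hanti i j h
    have h1 : S * S = ∑ i, ∑ j, Γ i * Γ j := by
      rw [hSdef, Finset.sum_mul_sum]
    have hdouble : S * S + S * S = ((2:ℂ) * K) • 1 := by
      have h2 : S * S + S * S = (∑ i, ∑ j, Γ i * Γ j) + ∑ i : Fin K, ∑ j, Γ j * Γ i := by
        rw [h1]; congr 1; rw [Finset.sum_comm]
      rw [h2, ← Finset.sum_add_distrib]
      have h3 : ∀ i : Fin K, ((∑ j, Γ i * Γ j) + ∑ j, Γ j * Γ i)
          = ∑ j, (Γ i * Γ j + Γ j * Γ i) := by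
        intro i; rw [← Finset.sum_add_distrib]
      rw [Finset.sum_congr rfl fun i _ => h3 i]
      have h4 : ∀ i : Fin K, (∑ j, (Γ i * Γ j + Γ j * Γ i)) = (2:ℂ) • 1 := by
        intro i
        rw [Finset.sum_congr rfl fun j _ => hpair i j]
        simp
      rw [Finset.sum_congr rfl fun i _ => h4 i, Finset.sum_const, Finset.card_univ,
        Fintype.card_fin]
      rw [← Nat.cast_smul_eq_nsmul ℂ K, smul_smul, mul_comm]
    have h5 : (2:ℂ) • (S * S) = (2:ℂ) • ((K:ℂ) • 1) := by
      rw [two_smul, hdouble, mul_smul]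
    exact smul_right_injective _ two_ne_zero h5
  have htr : S.trace = 0 := by
    rw [hSdef, trace_sum]
    simp [htrace]
  have hsq : ∀ i, hSH.eigenvalues i ^ 2 = (K : ℝ) := by
    intro i
    have hb := hSH.mulVec_eigenvectorBasis i
    have hb2 : (S * S) *ᵥ ⇑(hSH.eigenvectorBasis i)
        = ((hSH.eigenvalues i ^ 2 : ℝ)) • ⇑(hSH.eigenvectorBasis i) := by
      rw [← mulVec_mulVec, hb, mulVec_smul, hb, smul_smul, ← sq]
    rw [hSS, smul_mulVec, one_mulVec,
      RCLike.real_smul_eq_coe_smul (K := ℂ)] at hb2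
    have hbne : ⇑(hSH.eigenvectorBasis i) ≠ 0 := by
      intro h
      apply hSH.eigenvectorBasis.orthonormal.ne_zero i
      ext x
      exact congrFun h x
    have h6 : (K : ℂ) = ((hSH.eigenvalues i ^ 2 : ℝ) : ℂ) :=
      smul_left_injective ℂ hbne hb2
    exact_mod_cast h6.symm
  have hsumeig : ∑ i, hSH.eigenvalues i = 0 := by
    have hspec := hSH.spectral_theorem
    have h1 : S.trace = ∑ i, ((hSH.eigenvalues i : ℝ) : ℂ) := by
      conv_lhs => rw [hspec]
      rw [Unitary.conjStarAlgAut_apply, trace_mul_cycle, Unitary.coe_star_mul_self,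
        one_mul, trace_diagonal]
      simp [Function.comp]
    rw [htr] at h1
    have h2 : ((∑ i, hSH.eigenvalues i : ℝ) : ℂ) = 0 := by
      push_cast
      exact h1.symm
    exact_mod_cast h2
  have hKpos : (0:ℝ) < Real.sqrt K := Real.sqrt_pos.mpr (by
    have : (1:ℝ) ≤ K := by exact_mod_cast hK
    linarith)
  have hex : ∃ i, hSH.eigenvalues i = - Real.sqrt K := by
    by_contra hcon
    push_neg at hcon
    have hKs : Real.sqrt K ^ 2 = (K:ℝ) := Real.sq_sqrt (by positivity)
    have hall : ∀ i, hSH.eigenvalues i = Real.sqrt K := by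
      intro i
      have hsqi := hsq i
      have hz : (hSH.eigenvalues i - Real.sqrt K) * (hSH.eigenvalues i + Real.sqrt K) = 0 := by
        nlinarith [hsqi, hKs]
      rcases mul_eq_zero.mp hz with h | h
      · linarith
      · exact absurd (by linarith) (hcon i)
    have hsum2 : ∑ i : Fin d, hSH.eigenvalues i = d * Real.sqrt K := by
      rw [Finset.sum_congr rfl fun i _ => hall i, Finset.sum_const, Finset.card_univ,
        Fintype.card_fin, nsmul_eq_mul]
    rw [hsumeig] at hsum2
    have hdpos : (0:ℝ) < d := by exact_mod_cast hd
    nlinarith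
  obtain ⟨i₀, hi₀⟩ := hex
  set φ : Fin d → ℂ := ⇑(hSH.eigenvectorBasis i₀) with hφdef
  have hφne : φ ≠ 0 := by
    intro h
    apply hSH.eigenvectorBasis.orthonormal.ne_zero i₀
    ext x
    exact congrFun h x
  have hφeig : S *ᵥ φ = (-(Real.sqrt K) : ℂ) • φ := by
    have hb := hSH.mulVec_eigenvectorBasis i₀
    rw [hi₀, RCLike.real_smul_eq_coe_smul (K := ℂ)] at hb
    rw [hφdef, hb]
    norm_num
  -- Step 3: test vector and the eigenvalue computation
  set w : Fin D × Fin D → ℂ := fun q => v q.1 * v q.2 with hwdef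
  set ψ : Fin d × (Fin D × Fin D) → ℂ := fun p => φ p.1 * w p.2 with hψdef
  have hw1 : ∀ k, (U k ⊗ₖ (1 : Matrix (Fin D) (Fin D) ℂ)
      + (1 : Matrix (Fin D) (Fin D) ℂ) ⊗ₖ U k) *ᵥ w = (-2 : ℂ) • w := by
    intro k
    rw [add_mulVec, hwdef, myKron_mulVec, myKron_mulVec, hUv k, one_mulVec]
    ext q
    simp only [Pi.add_apply, Pi.neg_apply, Pi.smul_apply, smul_eq_mul]
    ring
  have hw2 : ∀ k, (U k ⊗ₖ U k) *ᵥ w = w := by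
    intro k
    rw [hwdef, myKron_mulVec, hUv k]
    ext q
    simp only [Pi.neg_apply]
    ring
  have hmain : (WK Γ U) *ᵥ ψ = (((K : ℝ) + 2 * Real.sqrt K : ℝ) : ℂ) • ψ := by
    rw [WK, mySum_mulVec]
    have hterm : ∀ k : Fin K, ((Γ k ⊗ₖ (U k ⊗ₖ (1 : Matrix (Fin D) (Fin D) ℂ)
        + (1 : Matrix (Fin D) (Fin D) ℂ) ⊗ₖ U k)
        + (1 : Matrix (Fin d) (Fin d) ℂ) ⊗ₖ (U k ⊗ₖ U k)) *ᵥ ψ)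
        = fun p => (Γ k *ᵥ φ) p.1 * ((-2:ℂ) • w) p.2 + φ p.1 * w p.2 := by
      intro k
      rw [add_mulVec, hψdef, myKron_mulVec, myKron_mulVec, hw1 k, hw2 k, one_mulVec]
      rfl
    rw [Finset.sum_congr rfl fun k _ => hterm k]
    ext p
    rw [Finset.sum_apply, Pi.smul_apply]
    have hS1 : ∑ k, (Γ k *ᵥ φ) p.1 = (S *ᵥ φ) p.1 := by
      rw [hSdef, mySum_mulVec, Finset.sum_apply]
    calc (∑ k : Fin K, ((Γ k *ᵥ φ) p.1 * ((-2:ℂ) • w) p.2 + φ p.1 * w p.2))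
        = (∑ k : Fin K, (Γ k *ᵥ φ) p.1) * ((-2:ℂ) • w) p.2
            + (K : ℂ) * (φ p.1 * w p.2) := by
          rw [Finset.sum_add_distrib, ← Finset.sum_mul, Finset.sum_const,
            Finset.card_univ, Fintype.card_fin, nsmul_eq_mul]
      _ = ((-(Real.sqrt K) : ℂ) * φ p.1) * ((-2:ℂ) * w p.2)
            + (K : ℂ) * (φ p.1 * w p.2) := by
          rw [hS1, hφeig]
          simp only [Pi.smul_apply, smul_eq_mul]
      _ = (((K : ℝ) + 2 * Real.sqrt K : ℝ) : ℂ) • (ψ p) := by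
          rw [hψdef]
          simp only [smul_eq_mul]
          push_cast
          ring
  -- Step 4: conclude via the operator norm
  set c : ℝ := (K : ℝ) + 2 * Real.sqrt K with hcdef
  have hc0 : 0 ≤ c := by positivity
  set ψ' : EuclideanSpace ℂ (Fin d × (Fin D × Fin D)) :=
    (EuclideanSpace.equiv (Fin d × (Fin D × Fin D)) ℂ).symm ψ with hψ'def
  have hnorm := (WK Γ U).l2_opNorm_mulVec ψ'
  have h2 : (EuclideanSpace.equiv (Fin d × (Fin D × Fin D)) ℂ).symm ((WK Γ U) *ᵥ ψ')
      = (c : ℂ) • ψ' := by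
    have := congrArg (⇑(EuclideanSpace.equiv (Fin d × (Fin D × Fin D)) ℂ).symm) hmain
    rw [map_smul] at this
    exact this
  rw [h2, norm_smul] at hnorm
  have hcc : ‖(c : ℂ)‖ = c := by
    rw [Complex.norm_real, Real.norm_of_nonneg hc0]
  rw [hcc] at hnorm
  have hψne : ψ ≠ 0 := by
    obtain ⟨x, hx⟩ := Function.ne_iff.mp hφne
    obtain ⟨a, ha⟩ := Function.ne_iff.mp hv0
    intro h
    have hpt := congrFun h (x, (a, a))
    simp only [hψdef, hwdef, Pi.zero_apply] at hpt
    simp only [Pi.zero_apply] at hx ha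
    exact (mul_ne_zero hx (mul_ne_zero ha ha)) hpt
  have hψ'ne : ψ' ≠ 0 := by
    intro h
    apply hψne
    have h3 := congrArg (⇑(EuclideanSpace.equiv (Fin d × (Fin D × Fin D)) ℂ)) h
    simpa [hψ'def] using h3
  have hnormpos : 0 < ‖ψ'‖ := norm_pos_iff.mpr hψ'ne
  have hfin : c ≤ ‖WK Γ U‖ := le_of_mul_le_mul_right hnorm hnormpos
  exact hfin
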